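/- Multiplicative Chernoff bound for geometric variables (small mean, upper tail): let X₁,...,X_n be i.i.d. geometric random variables on {0,1,2,...} with mean μ ∈ (0,1]. Then for any δ > 0, P((1/n)∑ X_i > (1+δ)μ) ≤ exp(−nμδ²/(2(1+δ)(1+μ)²)). -/

import Mathlib

open ProbabilityTheory MeasureTheory
open scoped ENNReal

private noncomputable def Fc (μ x : ℝ) : ℝ :=
  (1+x)*μ * (Real.log ((1+x)*(1+μ)) - Real.log (1+(1+x)*μ))
    - (Real.log (1+(1+x)*μ) - Real.log (1+μ)) - μ*x^2/(2*(1+x)*(1+μ)^2)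

private lemma Fc_deriv (μ : ℝ) (hμ0 : 0 < μ) {x : ℝ} (hx : 0 ≤ x) :
    HasDerivAt (Fc μ)
      (μ*(Real.log ((1+x)*(1+μ)) - Real.log (1+(1+x)*μ))
        - μ*(x^2+2*x)/(2*(1+μ)^2*(1+x)^2)) x := by
  have hx1 : (0:ℝ) < 1 + x := by linarith
  have hμ1 : (0:ℝ) < 1 + μ := by linarith
  have hb : (0:ℝ) < 1 + (1+x)*μ := by positivity
  have h1 : HasDerivAt (fun x : ℝ => (1+x)*(1+μ)) (1+μ) x := by
    simpa using ((hasDerivAt_id x).const_add 1).mul_const (1+μ)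
  have h2 : HasDerivAt (fun x : ℝ => Real.log ((1+x)*(1+μ))) ((1+μ)/((1+x)*(1+μ))) x :=
    h1.log (by positivity)
  have h3 : HasDerivAt (fun x : ℝ => 1+(1+x)*μ) μ x := by
    simpa using (((hasDerivAt_id x).const_add 1).mul_const μ).const_add 1
  have h4 : HasDerivAt (fun x : ℝ => Real.log (1+(1+x)*μ)) (μ/(1+(1+x)*μ)) x :=
    h3.log (ne_of_gt hb)
  have h5 : HasDerivAt (fun x : ℝ => (1+x)*μ) μ x := by
    simpa using ((hasDerivAt_id x).const_add 1).mul_const μ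
  have hA : HasDerivAt (fun x : ℝ => (1+x)*μ * (Real.log ((1+x)*(1+μ)) - Real.log (1+(1+x)*μ)))
      (μ * (Real.log ((1+x)*(1+μ)) - Real.log (1+(1+x)*μ))
        + (1+x)*μ * ((1+μ)/((1+x)*(1+μ)) - μ/(1+(1+x)*μ))) x := h5.mul (h2.sub h4)
  have hnum : HasDerivAt (fun x : ℝ => μ*x^2) (μ*(2*x)) x := by
    simpa using (hasDerivAt_pow 2 x).const_mul μ
  have hden : HasDerivAt (fun x : ℝ => 2*(1+x)*(1+μ)^2) (2*(1+μ)^2) x := by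
    have h := (((hasDerivAt_id x).const_add 1).const_mul 2).mul_const ((1+μ)^2)
    simpa using h
  have hB : HasDerivAt (fun x : ℝ => μ*x^2/(2*(1+x)*(1+μ)^2))
      ((μ*(2*x)*(2*(1+x)*(1+μ)^2) - μ*x^2*(2*(1+μ)^2))/(2*(1+x)*(1+μ)^2)^2) x :=
    hnum.div hden (by positivity)
  have := (hA.sub (h4.sub_const (Real.log (1+μ)))).sub hB
  refine this.congr_deriv ?_
  have e1 : (1+x)*(1+μ) ≠ 0 := by positivity
  field_simp
  ring

private lemma Fc_deriv_nonneg (μ : ℝ) (hμ0 : 0 < μ) {x : ℝ} (hx : 0 ≤ x) :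
    0 ≤ μ*(Real.log ((1+x)*(1+μ)) - Real.log (1+(1+x)*μ))
        - μ*(x^2+2*x)/(2*(1+μ)^2*(1+x)^2) := by
  have hx1 : (0:ℝ) < 1 + x := by linarith
  have hμ1 : (0:ℝ) < 1 + μ := by linarith
  have hb : (0:ℝ) < 1 + (1+x)*μ := by positivity
  have ha : (0:ℝ) < (1+x)*(1+μ) := by positivity
  -- log bound : log a - log b ≥ (a-b)/a
  have hlog : Real.log ((1+x)*(1+μ)) - Real.log (1+(1+x)*μ) ≥ x/((1+x)*(1+μ)) := by
    have h := Real.log_le_sub_one_of_pos (x := (1+(1+x)*μ)/((1+x)*(1+μ))) (by positivity)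
    rw [Real.log_div (ne_of_gt hb) (ne_of_gt ha)] at h
    have hq : (1+(1+x)*μ)/((1+x)*(1+μ)) - 1 = -(x/((1+x)*(1+μ))) := by
      field_simp; ring
    rw [hq] at h
    linarith
  have key : μ * (x/((1+x)*(1+μ))) ≥ μ*(x^2+2*x)/(2*(1+μ)^2*(1+x)^2) := by
    rw [ge_iff_le, mul_div_assoc' μ x, div_le_div_iff₀ (by positivity) (by positivity)]
    nlinarith [mul_nonneg (mul_nonneg hμ0.le hx) hx, mul_nonneg hμ0.le hx,
      mul_nonneg (mul_nonneg (mul_nonneg hμ0.le hx) hx) hμ0.le,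
      mul_nonneg (mul_nonneg hμ0.le hx) hμ0.le,
      mul_nonneg (mul_nonneg (mul_nonneg hμ0.le hx) hμ0.le) hμ0.le]
  have := mul_le_mul_of_nonneg_left hlog hμ0.le
  linarith [mul_le_mul_of_nonneg_left hlog hμ0.le]

private lemma Fc_nonneg (μ δ : ℝ) (hμ0 : 0 < μ) (hδ : 0 < δ) : 0 ≤ Fc μ δ := by
  have hmono : MonotoneOn (Fc μ) (Set.Icc 0 δ) := by
    apply monotoneOn_of_deriv_nonneg (convex_Icc 0 δ)
    · intro x hx
      exact (Fc_deriv μ hμ0 hx.1).differentiableAt.continuousAt.continuousWithinAt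
    · intro x hx
      rw [interior_Icc] at hx
      exact (Fc_deriv μ hμ0 hx.1.le).differentiableAt.differentiableWithinAt
    · intro x hx
      rw [interior_Icc] at hx
      rw [(Fc_deriv μ hμ0 hx.1.le).deriv]
      exact Fc_deriv_nonneg μ hμ0 hx.1.le
  have h0 : Fc μ 0 = 0 := by
    simp [Fc]
  have := hmono (Set.left_mem_Icc.2 hδ.le) (Set.right_mem_Icc.2 hδ.le) hδ.le
  rw [h0] at this
  exact this

private lemma scalar_bound (μ δ : ℝ) (hμ0 : 0 < μ) (hδ : 0 < δ) :
    ((1+δ)*(1+μ)/(1+(1+δ)*μ)) ^ (-((1+δ)*μ)) * ((1+(1+δ)*μ)/(1+μ))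
      ≤ Real.exp (-(μ*δ^2/(2*(1+δ)*(1+μ)^2))) := by
  have hδ1 : (0:ℝ) < 1 + δ := by linarith
  have hμ1 : (0:ℝ) < 1 + μ := by linarith
  have hb : (0:ℝ) < 1 + (1+δ)*μ := by positivity
  have hT : (0:ℝ) < (1+δ)*(1+μ)/(1+(1+δ)*μ) := by positivity
  have hB : (0:ℝ) < (1+(1+δ)*μ)/(1+μ) := by positivity
  rw [Real.rpow_def_of_pos hT, ← Real.exp_log hB, ← Real.exp_add, Real.exp_le_exp]
  rw [Real.log_div (by positivity) (ne_of_gt hμ1), Real.log_div (by positivity) (ne_of_gt hb)]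
  have h := Fc_nonneg μ δ hμ0 hδ
  unfold Fc at h
  rw [Real.log_mul (ne_of_gt hδ1) (ne_of_gt hμ1)] at *
  nlinarith [h]

private lemma tsum_pi_prod (g : ℕ → ℝ≥0∞) :
    ∀ n : ℕ, ∑' m : Fin n → ℕ, ∏ i, g (m i) = (∑' k, g k) ^ n := by
  intro n
  induction n with
  | zero =>
      rw [tsum_eq_single (fun i => 0) (by intro b hb; exact absurd (Subsingleton.elim b _) hb)]
      simp
  | succ n ih =>
      rw [← (Fin.consEquiv (fun _ : Fin (n+1) => ℕ)).tsum_eq, ENNReal.tsum_prod']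
      simp only [Fin.consEquiv_apply, Fin.prod_univ_succ, Fin.cons_zero, Fin.cons_succ]
      have : ∀ a : ℕ, ∑' b : Fin n → ℕ, g a * ∏ x, g (b x) = g a * (∑' k, g k) ^ n := by
        intro a; rw [ENNReal.tsum_mul_left, ih]
      simp_rw [this]
      rw [ENNReal.tsum_mul_right, pow_succ, mul_comm]

/-- Multiplicative Chernoff bound for geometric random variables (small mean, upper
tail): if `X₁,…,Xₙ` are i.i.d. geometric on `{0,1,2,...}` with mean `μ = (1−p)/p ≤ 1`,
then for any `δ > 0`, `P((1/n)∑Xᵢ > (1+δ)μ) ≤ exp(−nμδ²/(2(1+δ)(1+μ)²))`. -/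
theorem geometric_chernoff_upper_small_mean {Ω : Type*} [MeasurableSpace Ω]
    (P : Measure Ω) [IsProbabilityMeasure P] (n : ℕ) (hn : 0 < n)
    (X : Fin n → Ω → ℕ) (p : ℝ) (hp : p ∈ Set.Ioo (0 : ℝ) 1)
    (hindep : iIndepFun X P)
    (hdist : ∀ i m, P {ω | X i ω = m} = ENNReal.ofReal ((1 - p) ^ m * p))
    (μ : ℝ) (hμ : μ = (1 - p) / p) (hμ0 : 0 < μ) (hμ1 : μ ≤ 1) (δ : ℝ) (hδ : 0 < δ) :
    P {ω | (∑ i, (X i ω : ℝ)) / n > (1 + δ) * μ}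
      ≤ ENNReal.ofReal
          (Real.exp (-(n * μ * δ ^ 2) / (2 * (1 + δ) * (1 + μ) ^ 2))) := by
  classical
  obtain ⟨hp0, hp1⟩ := hp
  set q : ℝ := 1 - p with hq_def
  have hq0 : 0 < q := by simp [hq_def]; linarith
  have hq1 : q < 1 := by simp [hq_def]; linarith
  set α : ℝ := (1 + δ) * μ with hα_def
  have hα0 : 0 < α := by positivity
  set T : ℝ := (1 + δ) * (1 + μ) / (1 + α) with hT_def
  have h1α : (0:ℝ) < 1 + α := by linarith
  have h1μ : (0:ℝ) < 1 + μ := by linarith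
  have h1δ : (0:ℝ) < 1 + δ := by linarith
  have hT0 : 0 < T := by positivity
  have hT1 : 1 ≤ T := by
    rw [hT_def, le_div_iff₀ h1α]
    nlinarith
  -- basic identities
  have hpμ : p * (1 + μ) = 1 := by
    rw [hμ]; field_simp; rw [hq_def]; ring
  have hqμ : q * (1 + μ) = μ := by
    rw [hq_def]; nlinarith
  have hnum : q * ((1 + δ) * (1 + μ)) = α := by
    rw [hα_def]; nlinarith [hqμ]
  have hqT : q * T = α / (1 + α) := by
    rw [hT_def, ← mul_div_assoc, hnum]
  have hqT0 : 0 ≤ q * T := by positivity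
  have hqT1 : q * T < 1 := by rw [hqT, div_lt_one h1α]; linarith
  have hpinv : p = (1 + μ)⁻¹ := by
    rw [inv_eq_one_div, eq_div_iff (ne_of_gt h1μ)]; exact hpμ
  clear_value q α T
  -- the cells
  set S : (Fin n → ℕ) → Set Ω := fun m =>
    if (∑ i, (m i : ℝ)) / n > α then ⋂ i, X i ⁻¹' {m i} else ∅ with hS_def
  have hsub : {ω | (∑ i, (X i ω : ℝ)) / n > α} ⊆ ⋃ m, S m := by
    intro ω hω
    refine Set.mem_iUnion.2 ⟨fun i => X i ω, ?_⟩
    have hω' : (∑ i, (X i ω : ℝ)) / n > α := hω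
    simp only [hS_def]
    rw [if_pos hω']
    exact Set.mem_iInter.2 fun i => rfl
  set C : ℝ := (T ^ (-α)) ^ n with hC_def
  have hC0 : 0 ≤ C := by positivity
  set g : ℕ → ℝ≥0∞ := fun k => ENNReal.ofReal ((q * T) ^ k * p) with hg_def
  have hbound : ∀ m : Fin n → ℕ,
      P (S m) ≤ ENNReal.ofReal C * ∏ i, g (m i) := by
    intro m
    by_cases hc : (∑ i, (m i : ℝ)) / n > α
    · rw [hS_def]; simp only [if_pos hc]
      have hmeas : P (⋂ i, X i ⁻¹' {m i}) = ∏ i, P (X i ⁻¹' {m i}) :=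
        hindep.meas_iInter (fun i => ⟨{m i}, measurableSet_singleton _, rfl⟩)
      have hXi : ∀ i, P (X i ⁻¹' {m i}) = ENNReal.ofReal (q ^ (m i) * p) := by
        intro i
        have : X i ⁻¹' {m i} = {ω | X i ω = m i} := rfl
        rw [this, hdist i (m i)]
      rw [hmeas, Finset.prod_congr rfl (fun i _ => hXi i)]
      rw [← ENNReal.ofReal_prod_of_nonneg (fun i _ => by positivity),
        hg_def, ← ENNReal.ofReal_prod_of_nonneg (fun i _ => by positivity),
        ← ENNReal.ofReal_mul hC0]
      apply ENNReal.ofReal_le_ofReal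
      have hprod0 : ∏ i, (q * T) ^ (m i) * p
          = T ^ (∑ i, m i) * ∏ i, q ^ (m i) * p := by
        calc ∏ i, (q * T) ^ (m i) * p
            = ∏ i, (T ^ (m i) * (q ^ (m i) * p)) := by
              refine Finset.prod_congr rfl fun i _ => ?_
              rw [mul_pow]; ring
          _ = (∏ i, T ^ (m i)) * ∏ i, q ^ (m i) * p := Finset.prod_mul_distrib
          _ = T ^ (∑ i, m i) * ∏ i, q ^ (m i) * p := by
              rw [Finset.prod_pow_eq_pow_sum]
      have hprod : C * ∏ i, (q * T) ^ (m i) * p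
          = ((T ^ (-α)) ^ n * T ^ (∑ i, m i)) * ∏ i, q ^ (m i) * p := by
        rw [hprod0, hC_def]; ring
      rw [hprod]
      have hfac : 1 ≤ (T ^ (-α)) ^ n * T ^ (∑ i, m i) := by
        have e1 : ((T ^ (-α)) ^ n : ℝ) = T ^ ((-α) * n) := by
          rw [Real.rpow_mul hT0.le, Real.rpow_natCast]
        have e2 : (T ^ (∑ i, m i) : ℝ) = T ^ ((∑ i, m i : ℕ) : ℝ) := by
          rw [Real.rpow_natCast]
        rw [e1, e2, ← Real.rpow_add hT0]
        apply Real.one_le_rpow hT1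
        have hsum : α * n < (∑ i, (m i : ℝ)) := by
          rw [gt_iff_lt, lt_div_iff₀ (by exact_mod_cast hn)] at hc
          exact hc
        push_cast
        linarith
      calc ∏ i, q ^ (m i) * p = 1 * ∏ i, q ^ (m i) * p := (one_mul _).symm
        _ ≤ ((T ^ (-α)) ^ n * T ^ (∑ i, m i)) * ∏ i, q ^ (m i) * p := by
            apply mul_le_mul_of_nonneg_right hfac
            apply Finset.prod_nonneg
            intro i _
            positivity
    · rw [hS_def]; simp only [if_neg hc]; simp
  calc P {ω | (∑ i, (X i ω : ℝ)) / n > α}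
      ≤ P (⋃ m, S m) := measure_mono hsub
    _ ≤ ∑' m : Fin n → ℕ, P (S m) := measure_iUnion_le _
    _ ≤ ∑' m : Fin n → ℕ, ENNReal.ofReal C * ∏ i, g (m i) := ENNReal.tsum_le_tsum hbound
    _ = ENNReal.ofReal C * (∑' k, g k) ^ n := by
        rw [ENNReal.tsum_mul_left, tsum_pi_prod]
    _ = ENNReal.ofReal C * ENNReal.ofReal ((1 + α) / (1 + μ)) ^ n := by
        congr 1
        have hgk : ∀ k : ℕ, g k = ENNReal.ofReal (q * T) ^ k * ENNReal.ofReal p := by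
          intro k
          simp only [hg_def]
          rw [ENNReal.ofReal_mul (pow_nonneg hqT0 k), ENNReal.ofReal_pow hqT0]
        simp_rw [hgk]
        rw [ENNReal.tsum_mul_right, ENNReal.tsum_geometric]
        rw [← ENNReal.ofReal_one, ← ENNReal.ofReal_sub _ hqT0,
          ← ENNReal.ofReal_inv_of_pos (by linarith),
          ← ENNReal.ofReal_mul (inv_nonneg.2 (by linarith : (0:ℝ) ≤ 1 - q * T))]
        congr 1
        rw [hqT, hpinv]
        have h1 : (1:ℝ) - α / (1 + α) = (1 + α)⁻¹ := by
          field_simp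
          ring
        rw [h1, inv_inv, div_eq_mul_inv]
    _ ≤ ENNReal.ofReal (Real.exp (-(n * μ * δ ^ 2) / (2 * (1 + δ) * (1 + μ) ^ 2))) := by
        rw [← ENNReal.ofReal_pow (by positivity), ← ENNReal.ofReal_mul hC0]
        apply ENNReal.ofReal_le_ofReal
        have hper : T ^ (-α) * ((1 + α) / (1 + μ))
            ≤ Real.exp (-(μ * δ ^ 2 / (2 * (1 + δ) * (1 + μ) ^ 2))) := by
          have := scalar_bound μ δ hμ0 hδ
          rw [hT_def, hα_def]
          exact this
        have hCn : C * ((1 + α) / (1 + μ)) ^ n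
            = (T ^ (-α) * ((1 + α) / (1 + μ))) ^ n := by
          rw [hC_def, mul_pow]
        rw [hCn]
        calc (T ^ (-α) * ((1 + α) / (1 + μ))) ^ n
            ≤ (Real.exp (-(μ * δ ^ 2 / (2 * (1 + δ) * (1 + μ) ^ 2)))) ^ n := by
              apply pow_le_pow_left₀ (by positivity) hper
          _ = Real.exp (-(n * μ * δ ^ 2) / (2 * (1 + δ) * (1 + μ) ^ 2)) := by
              rw [← Real.exp_nat_mul]
              congr 1
              push_cast
              ring
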